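/- (Proposition 1.6, first part.) Let (X, μ) be a probability space such that μ is nontrivial, i.e. there exists a measurable set E ⊆ X with 0 < μ(E) < 1. Then for every measurable, measure-preserving map T : X → X there exists a sequence (A_n)_{n≥1} of measurable subsets of X with ∑_{n=1}^∞ μ(A_n) = ∞ which is not Borel–Cantelli; that is, the set { x ∈ X : T^n(x) ∈ A_n for infinitely many n } does not have full μ-measure. -/

import Mathlib

open MeasureTheory Filter
open scoped ENNReal

private lemma sum_tendsto_aux {g : ℕ → ℝ} (hg : ∀ n, 0 ≤ g n)
    (h : ∀ b : ℝ, ∃ N : ℕ, b ≤ ∑ n ∈ Finset.Icc 1 N, g n) :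
    Tendsto (fun N : ℕ => ∑ n ∈ Finset.Icc 1 N, g n) atTop atTop :=
  tendsto_atTop_atTop_of_monotone
    (fun _ _ hNM => Finset.sum_le_sum_of_subset_of_nonneg
      (Finset.Icc_subset_Icc_right hNM) (fun i _ _ => hg i)) h

private lemma caseA {X : Type*} [MeasurableSpace X] (μ : Measure X) [IsProbabilityMeasure μ]
    (T : X → X) (hT : Measurable T) (hTm : MeasurePreserving T μ μ)
    (hA : ∀ k : ℕ, ∃ S : Set X, MeasurableSet S ∧ 0 < μ S ∧ μ S ≤ 2⁻¹ ^ k) :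
    ∃ A : ℕ → Set X, (∀ n, MeasurableSet (A n)) ∧
      Tendsto (fun N : ℕ => ∑ n ∈ Finset.Icc 1 N, (μ (A n)).toReal) atTop atTop ∧
      ¬ (∀ᵐ x ∂μ, ∃ᶠ n in atTop, T^[n] x ∈ A n) := by
  classical
  choose S hSm hSpos hSle using hA
  have hSne : ∀ k, μ (S k) ≠ ∞ := fun k => measure_ne_top μ _
  have hSr : ∀ k, 0 < (μ (S k)).toReal := fun k => ENNReal.toReal_pos (hSpos k).ne' (hSne k)
  set L : ℕ → ℕ := fun k => ⌈((μ (S k)).toReal)⁻¹⌉₊ with hLdef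
  have hL1 : ∀ k, 1 ≤ L k := fun k => Nat.ceil_pos.mpr (inv_pos.mpr (hSr k))
  have hLmul : ∀ k, 1 ≤ (L k : ℝ) * (μ (S k)).toReal := by
    intro k
    have h1 : ((μ (S k)).toReal)⁻¹ ≤ (L k : ℝ) := Nat.le_ceil _
    calc (1:ℝ) = ((μ (S k)).toReal)⁻¹ * (μ (S k)).toReal :=
          (inv_mul_cancel₀ (hSr k).ne').symm
      _ ≤ (L k : ℝ) * (μ (S k)).toReal :=
          mul_le_mul_of_nonneg_right h1 (hSr k).le
  set N : ℕ → ℕ := fun k => Nat.rec 1 (fun k ih => ih + L k) k with hNdef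
  have hN0 : N 0 = 1 := rfl
  have hNs : ∀ k, N (k+1) = N k + L k := fun k => rfl
  have hN1 : ∀ k, 1 ≤ N k := by
    intro k; induction k with
    | zero => exact le_refl 1
    | succ k ih => rw [hNs]; omega
  have hNlt : ∀ k, N k < N (k+1) := fun k => by have := hL1 k; rw [hNs]; omega
  have hNmono : StrictMono N := strictMono_nat_of_lt_succ hNlt
  have hNk : ∀ k, k + 1 ≤ N k := by
    intro k; induction k with
    | zero => exact le_refl 1
    | succ k ih => have := hL1 k; rw [hNs]; omega
  set K : ℕ → ℕ := fun n => Nat.findGreatest (fun k => N k ≤ n) n with hKdef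
  have hKspec : ∀ {k n}, N k ≤ n → n < N (k+1) → K n = k := by
    intro k n h1 h2
    have hkn : k ≤ n := le_trans (le_trans (by omega) (hNk k)) h1
    have hge : k ≤ K n := Nat.le_findGreatest (P := fun k => N k ≤ n) hkn h1
    have hle : K n ≤ k := by
      by_contra hc
      push_neg at hc
      have hP : N (K n) ≤ n := Nat.findGreatest_spec (P := fun k => N k ≤ n) hkn h1
      have : N (k+1) ≤ N (K n) := hNmono.monotone hc
      omega
    omega
  set A : ℕ → Set X := fun n =>
    if 1 ≤ n then T^[N (K n + 1) - n] ⁻¹' S (K n) else (∅ : Set X) with hAdef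
  have hAm : ∀ n, MeasurableSet (A n) := by
    intro n; dsimp only [A]; split
    · exact (hT.iterate _) (hSm _)
    · exact MeasurableSet.empty
  set Z : ℕ → Set X := fun k => T^[N (k+1)] ⁻¹' S k with hZdef
  have hblock : ∀ {k n} (x : X), N k ≤ n → n < N (k+1) → (T^[n] x ∈ A n ↔ x ∈ Z k) := by
    intro k n x h1 h2
    have hn1 : 1 ≤ n := le_trans (hN1 k) h1
    have hK : K n = k := hKspec h1 h2
    simp only [A, if_pos hn1, hK, Set.mem_preimage, Z]
    rw [← Function.iterate_add_apply, Nat.sub_add_cancel (by omega : n ≤ N (k+1))]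
  have hAμ : ∀ {k n}, N k ≤ n → n < N (k+1) → μ (A n) = μ (S k) := by
    intro k n h1 h2
    have hn1 : 1 ≤ n := le_trans (hN1 k) h1
    have hK : K n = k := hKspec h1 h2
    simp only [A, if_pos hn1, hK]
    exact (hTm.iterate _).measure_preimage (hSm k).nullMeasurableSet
  have hZμ : ∀ k, μ (Z k) = μ (S k) := fun k =>
    (hTm.iterate _).measure_preimage (hSm k).nullMeasurableSet
  have hblocksum : ∀ k, 1 ≤ ∑ n ∈ Finset.Ico (N k) (N (k+1)), (μ (A n)).toReal := by
    intro k
    have hcongr : ∀ n ∈ Finset.Ico (N k) (N (k+1)), (μ (A n)).toReal = (μ (S k)).toReal := by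
      intro n hn; rw [Finset.mem_Ico] at hn; rw [hAμ hn.1 hn.2]
    rw [Finset.sum_congr rfl hcongr, Finset.sum_const, Nat.card_Ico, hNs,
      Nat.add_sub_cancel_left, nsmul_eq_mul]
    exact hLmul k
  have hcum : ∀ k : ℕ, ((k:ℝ)+1) ≤ ∑ n ∈ Finset.Ico 1 (N (k+1)), (μ (A n)).toReal := by
    intro k; induction k with
    | zero => simpa [hN0] using hblocksum 0
    | succ k ih =>
      have hsplit := Finset.sum_Ico_consecutive (fun n => (μ (A n)).toReal)
        (hN1 (k+1)) (hNlt (k+1)).le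
      have := hblocksum (k+1)
      push_cast
      push_cast at ih
      rw [← hsplit]
      linarith
  have hdiv : Tendsto (fun N' : ℕ => ∑ n ∈ Finset.Icc 1 N', (μ (A n)).toReal) atTop atTop := by
    apply sum_tendsto_aux (fun n => ENNReal.toReal_nonneg)
    intro b
    obtain ⟨k, hk⟩ := exists_nat_ge b
    refine ⟨N (k+1) - 1, ?_⟩
    have hIcc : Finset.Icc 1 (N (k+1) - 1) = Finset.Ico 1 (N (k+1)) := by
      have h := hN1 (k+1)
      ext m
      simp only [Finset.mem_Icc, Finset.mem_Ico]
      omega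
    rw [hIcc]
    have := hcum k
    linarith
  have hbad : μ {x | ∃ᶠ n in atTop, T^[n] x ∈ A n} = 0 := by
    have hsub : {x | ∃ᶠ n in atTop, T^[n] x ∈ A n} ⊆ {x | ∃ᶠ k in atTop, x ∈ Z k} := by
      intro x hx
      rw [Set.mem_setOf_eq, frequently_atTop] at hx ⊢
      intro k0
      obtain ⟨n, hn, hmem⟩ := hx (N k0)
      have hn1 : 1 ≤ n := le_trans (hN1 k0) hn
      have h1 : N (K n) ≤ n := Nat.findGreatest_spec (P := fun k => N k ≤ n)
        (Nat.zero_le n) (by show N 0 ≤ n; rw [hN0]; exact hn1)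
      have h2 : n < N (K n + 1) := by
        by_contra hc
        push_neg at hc
        have hbnd : K n + 1 ≤ n := le_trans (le_trans (by omega) (hNk (K n + 1))) hc
        have h3 : K n + 1 ≤ K n := Nat.le_findGreatest (P := fun k => N k ≤ n) hbnd hc
        omega
      have hk0 : k0 ≤ K n := Nat.le_findGreatest (P := fun k => N k ≤ n)
        (le_trans (le_trans (by omega) (hNk k0)) hn) hn
      exact ⟨K n, hk0, (hblock x h1 h2).mp hmem⟩
    refine measure_mono_null hsub ?_
    apply measure_setOf_frequently_eq_zero
    have hle : ∀ k, μ (Z k) ≤ 2⁻¹ ^ k := fun k => (hZμ k) ▸ hSle k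
    refine ne_of_lt (lt_of_le_of_lt (ENNReal.tsum_le_tsum hle) ?_)
    rw [ENNReal.tsum_geometric]
    refine ENNReal.inv_lt_top.mpr ?_
    rw [tsub_pos_iff_lt]
    exact ENNReal.inv_lt_one.mpr (by norm_num)
  refine ⟨A, hAm, hdiv, ?_⟩
  intro hae
  rw [ae_iff] at hae
  have hle : (1:ℝ≥0∞) ≤ 0 := by
    have hsum := measure_union_le (μ := μ) {x | ∃ᶠ n in atTop, T^[n] x ∈ A n}
      {x | ¬ ∃ᶠ n in atTop, T^[n] x ∈ A n}
    rw [hbad, hae] at hsum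
    calc (1:ℝ≥0∞) = μ Set.univ := measure_univ.symm
      _ ≤ μ ({x | ∃ᶠ n in atTop, T^[n] x ∈ A n} ∪ {x | ¬ ∃ᶠ n in atTop, T^[n] x ∈ A n}) := by
          refine measure_mono fun x _ => ?_
          by_cases h : ∃ᶠ n in atTop, T^[n] x ∈ A n
          · exact Set.mem_union_left _ h
          · exact Set.mem_union_right _ h
      _ ≤ 0 + 0 := hsum
      _ = 0 := by simp
  simp at hle

private lemma caseB {X : Type*} [MeasurableSpace X] (μ : Measure X) [IsProbabilityMeasure μ]
    (E : Set X) (hEm : MeasurableSet E) (hE0 : 0 < μ E) (hE1 : μ E < 1)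
    (T : X → X) (hT : Measurable T) (hTm : MeasurePreserving T μ μ)
    (k₀ : ℕ) (hgap : ∀ S : Set X, MeasurableSet S → μ S ≤ 2⁻¹ ^ k₀ → μ S = 0) :
    ∃ A : ℕ → Set X, (∀ n, MeasurableSet (A n)) ∧
      Tendsto (fun N : ℕ => ∑ n ∈ Finset.Icc 1 N, (μ (A n)).toReal) atTop atTop ∧
      ¬ (∀ᵐ x ∂μ, ∃ᶠ n in atTop, T^[n] x ∈ A n) := by
  classical
  set G : ℕ → Set X := fun j => T^[j] ⁻¹' E with hGdef
  have hGm : ∀ j, MeasurableSet (G j) := fun j => (hT.iterate j) hEm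
  have hGμ : ∀ j, μ (G j) = μ E := fun j =>
    (hTm.iterate j).measure_preimage hEm.nullMeasurableSet
  set M : ℕ := 2 ^ k₀ with hM
  set Kc : ℕ := 2 ^ M + 1 with hKc
  set cell : (Fin Kc → Bool) → Set X :=
    fun f => ⋂ j : Fin Kc, (if f j then G (j : ℕ) else (G (j : ℕ))ᶜ) with hcelldef
  have hcellm : ∀ f, MeasurableSet (cell f) := by
    intro f
    apply MeasurableSet.iInter
    intro j
    by_cases h : f j
    · simp only [h, if_true]; exact hGm _
    · simp only [h, if_false]; exact (hGm _).compl
  have hmemcell : ∀ x : X, x ∈ cell (fun j => decide (x ∈ G (j : ℕ))) := by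
    intro x
    refine Set.mem_iInter.mpr fun j => ?_
    by_cases h : x ∈ G (j : ℕ)
    · simp [h]
    · simp [h]
  have hcell_unique : ∀ (x : X) (f : Fin Kc → Bool), x ∈ cell f →
      f = fun j : Fin Kc => decide (x ∈ G (j : ℕ)) := by
    intro x f hx
    funext j
    have hj := Set.mem_iInter.mp hx j
    cases hfj : f j with
    | false =>
        simp only [hfj, Bool.false_eq_true, if_false] at hj
        symm
        rw [decide_eq_false_iff_not]
        exact hj
    | true => simp only [hfj, if_true] at hj; simp [hj]
  set C : Finset (Fin Kc → Bool) := Finset.univ.filter (fun f => 0 < μ (cell f)) with hC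
  have hCcard : C.card ≤ M := by
    have hdisj : (C : Set (Fin Kc → Bool)).PairwiseDisjoint cell := by
      intro f hf g hg hfg
      refine Set.disjoint_left.mpr fun x hxf hxg => ?_
      exact hfg ((hcell_unique x f hxf).trans (hcell_unique x g hxg).symm)
    have hsum1 : ∑ f ∈ C, μ (cell f) ≤ 1 := by
      rw [← measure_biUnion_finset hdisj (fun f _ => hcellm f)]
      exact prob_le_one
    have heach : ∀ f ∈ C, (2⁻¹ : ℝ≥0∞) ^ k₀ ≤ μ (cell f) := by
      intro f hf
      rw [hC, Finset.mem_filter] at hf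
      by_contra hlt
      push_neg at hlt
      exact absurd (hgap _ (hcellm f) hlt.le) hf.2.ne'
    have hcard : (C.card : ℝ≥0∞) * 2⁻¹ ^ k₀ ≤ 1 := by
      calc (C.card : ℝ≥0∞) * 2⁻¹ ^ k₀ = ∑ _f ∈ C, (2⁻¹ : ℝ≥0∞) ^ k₀ := by
            rw [Finset.sum_const, nsmul_eq_mul]
        _ ≤ ∑ f ∈ C, μ (cell f) := Finset.sum_le_sum heach
        _ ≤ 1 := hsum1
    have hb0 : ((2 : ℝ≥0∞) ^ k₀) ≠ 0 := pow_ne_zero _ (by norm_num)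
    have hbt : ((2 : ℝ≥0∞) ^ k₀) ≠ ⊤ := ENNReal.pow_ne_top (by norm_num)
    have h2 : (C.card : ℝ≥0∞) ≤ 2 ^ k₀ := by
      rw [← ENNReal.inv_pow] at hcard
      calc (C.card : ℝ≥0∞) = ((C.card : ℝ≥0∞) * ((2:ℝ≥0∞) ^ k₀)⁻¹) * 2 ^ k₀ := by
            rw [mul_assoc, ENNReal.inv_mul_cancel hb0 hbt, mul_one]
        _ ≤ 1 * 2 ^ k₀ := by gcongr
        _ = 2 ^ k₀ := one_mul _
    have h3 : (C.card : ℝ≥0∞) ≤ ((M : ℕ) : ℝ≥0∞) := by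
      rw [hM]; push_cast; exact h2
    exact_mod_cast h3
  obtain ⟨i, -, i', -, hne, heq⟩ :
      ∃ i ∈ (Finset.univ : Finset (Fin Kc)), ∃ i' ∈ (Finset.univ : Finset (Fin Kc)),
        i ≠ i' ∧ C.filter (fun f => f i) = C.filter (fun f => f i') := by
    apply Finset.exists_ne_map_eq_of_card_lt_of_maps_to (t := C.powerset)
    · rw [Finset.card_powerset, Finset.card_univ, Fintype.card_fin]
      calc 2 ^ C.card ≤ 2 ^ M := Nat.pow_le_pow_right (by norm_num) hCcard
        _ < 2 ^ M + 1 := Nat.lt_succ_self _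
    · exact fun i _ => Finset.mem_powerset.mpr (Finset.filter_subset _ _)
  have hnullpair : ∀ (i i' : Fin Kc), C.filter (fun f => f i) = C.filter (fun f => f i') →
      μ (G (i : ℕ) \ G (i' : ℕ)) = 0 := by
    intro i i' heq
    set D : Finset (Fin Kc → Bool) := Finset.univ.filter (fun f => ¬ 0 < μ (cell f)) with hD
    have hsub : G (i : ℕ) \ G (i' : ℕ) ⊆ ⋃ f ∈ D, cell f := by
      intro x hx
      set f : Fin Kc → Bool := fun j => decide (x ∈ G (j : ℕ)) with hf
      have hxf : x ∈ cell f := hmemcell x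
      have hnotC : f ∉ C := by
        intro hfC
        have hfi : f i = true := decide_eq_true hx.1
        have hmem1 : f ∈ C.filter (fun f => f i) := Finset.mem_filter.mpr ⟨hfC, hfi⟩
        rw [heq] at hmem1
        have hfi' : f i' = true := (Finset.mem_filter.mp hmem1).2
        exact hx.2 (of_decide_eq_true hfi')
      have h0 : ¬ 0 < μ (cell f) := fun hpos =>
        hnotC (Finset.mem_filter.mpr ⟨Finset.mem_univ _, hpos⟩)
      exact Set.mem_biUnion (Finset.mem_filter.mpr ⟨Finset.mem_univ _, h0⟩) hxf
    refine measure_mono_null hsub (le_antisymm ?_ zero_le)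
    calc μ (⋃ f ∈ D, cell f) ≤ ∑ f ∈ D, μ (cell f) := measure_biUnion_finset_le D cell
      _ = 0 := Finset.sum_eq_zero fun f hf => by
          have := (Finset.mem_filter.mp hf).2
          exact le_antisymm (not_lt.mp this) zero_le
  -- orient the pair
  have main : ∀ a b : ℕ, a < b → μ (G b \ G a) = 0 →
      ∃ A : ℕ → Set X, (∀ n, MeasurableSet (A n)) ∧
        Tendsto (fun N : ℕ => ∑ n ∈ Finset.Icc 1 N, (μ (A n)).toReal) atTop atTop ∧
        ¬ (∀ᵐ x ∂μ, ∃ᶠ n in atTop, T^[n] x ∈ A n) := by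
    intro a b hab hnull
    set d : ℕ := b - a with hd
    have hd1 : 1 ≤ d := by omega
    have hab' : a + d = b := by omega
    have hEr : 0 < (μ E).toReal := ENNReal.toReal_pos hE0.ne' (measure_ne_top μ E)
    have hshift : ∀ m : ℕ, μ (G (b + m) \ G (a + m)) = 0 := by
      intro m
      have h1 : G (b + m) = T^[m] ⁻¹' G b := by
        simp only [hGdef]
        rw [Function.iterate_add, Set.preimage_comp]
      have h2 : G (a + m) = T^[m] ⁻¹' G a := by
        simp only [hGdef]
        rw [Function.iterate_add, Set.preimage_comp]
      rw [h1, h2, ← Set.preimage_diff,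
        (hTm.iterate m).measure_preimage ((hGm b).diff (hGm a)).nullMeasurableSet]
      exact hnull
    have hchain : ∀ k : ℕ, μ (G (a + d * k) \ G a) = 0 := by
      intro k
      induction k with
      | zero => simp
      | succ k ih =>
        have hstep : μ (G (a + d * (k + 1)) \ G (a + d * k)) = 0 := by
          have hb2 : a + d * (k + 1) = b + d * k := by
            calc a + d * (k + 1) = (a + d) + d * k := by ring
              _ = b + d * k := by rw [hab']
          rw [hb2]
          exact hshift (d * k)
        have hsub : G (a + d * (k + 1)) \ G a ⊆
            (G (a + d * (k + 1)) \ G (a + d * k)) ∪ (G (a + d * k) \ G a) := by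
          intro x hx
          by_cases h : x ∈ G (a + d * k)
          · exact Or.inr ⟨h, hx.2⟩
          · exact Or.inl ⟨hx.1, h⟩
        exact measure_mono_null hsub (measure_union_null hstep ih)
    set A : ℕ → Set X := fun n => if a < n ∧ d ∣ (n - a) then E else (∅ : Set X) with hAdef
    have hAm : ∀ n, MeasurableSet (A n) := by
      intro n; dsimp only [A]; split
      · exact hEm
      · exact MeasurableSet.empty
    have hAval : ∀ k : ℕ, 1 ≤ k → A (a + d * k) = E := by
      intro k hk
      have hdk : 0 < d * k := Nat.mul_pos (by omega) (by omega)
      have h1 : a < a + d * k := by omega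
      have h2 : d ∣ (a + d * k - a) := by
        rw [Nat.add_sub_cancel_left]
        exact dvd_mul_right d k
      simp only [A, if_pos (And.intro h1 h2)]
    have hdiv : Tendsto (fun N : ℕ => ∑ n ∈ Finset.Icc 1 N, (μ (A n)).toReal) atTop atTop := by
      apply sum_tendsto_aux (fun n => ENNReal.toReal_nonneg)
      intro bd
      obtain ⟨k, hk⟩ := exists_nat_ge (bd / (μ E).toReal)
      refine ⟨a + d * (k + 1), ?_⟩
      have hinj : ∀ j1 ∈ Finset.Icc 1 (k + 1), ∀ j2 ∈ Finset.Icc 1 (k + 1),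
          a + d * j1 = a + d * j2 → j1 = j2 := by
        intro j1 _ j2 _ h
        have h2 : d * j1 = d * j2 := Nat.add_left_cancel h
        exact Nat.eq_of_mul_eq_mul_left (by omega) h2
      calc bd ≤ (k : ℝ) * (μ E).toReal := (div_le_iff₀ hEr).mp hk
        _ ≤ ((k : ℝ) + 1) * (μ E).toReal := by
            have := hEr.le
            nlinarith
        _ = ∑ j ∈ Finset.Icc 1 (k + 1), (μ (A (a + d * j))).toReal := by
            rw [Finset.sum_congr rfl (fun j hj => by
              rw [hAval j (Finset.mem_Icc.mp hj).1]), Finset.sum_const, Nat.card_Icc]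
            simp only [Nat.add_sub_cancel, nsmul_eq_mul]
            push_cast
            ring
        _ = ∑ n ∈ (Finset.Icc 1 (k + 1)).image (fun j => a + d * j), (μ (A n)).toReal := by
            rw [Finset.sum_image hinj]
        _ ≤ ∑ n ∈ Finset.Icc 1 (a + d * (k + 1)), (μ (A n)).toReal := by
            apply Finset.sum_le_sum_of_subset_of_nonneg
            · intro n hn
              obtain ⟨j, hj, rfl⟩ := Finset.mem_image.mp hn
              rw [Finset.mem_Icc] at hj ⊢
              have h1 : d * j ≤ d * (k + 1) := Nat.mul_le_mul_left d hj.2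
              have h2 : 0 < d * j := Nat.mul_pos (by omega) (by omega)
              omega
            · exact fun _ _ _ => ENNReal.toReal_nonneg
    refine ⟨A, hAm, hdiv, ?_⟩
    intro hae
    rw [ae_iff] at hae
    have hbadsub : {x | ∃ᶠ n in atTop, T^[n] x ∈ A n} ⊆
        G a ∪ ⋃ k : ℕ, (G (a + d * k) \ G a) := by
      intro x hx
      rw [Set.mem_setOf_eq, frequently_atTop] at hx
      obtain ⟨n, hn, hmem⟩ := hx (a + 1)
      have hcond : a < n ∧ d ∣ (n - a) := by
        by_contra h
        dsimp only [A] at hmem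
        rw [if_neg h] at hmem
        exact hmem
      obtain ⟨k, hkd⟩ := hcond.2
      have hn' : n = a + d * k := by
        have h1 := hcond.1
        omega
      have hxG : x ∈ G n := by
        dsimp only [A] at hmem
        rw [if_pos hcond] at hmem
        exact hmem
      by_cases hga : x ∈ G a
      · exact Or.inl hga
      · exact Or.inr (Set.mem_iUnion.mpr ⟨k, ⟨hn' ▸ hxG, hga⟩⟩)
    have hnullU : μ (⋃ k : ℕ, (G (a + d * k) \ G a)) = 0 :=
      measure_iUnion_null fun k => hchain k
    have hlt : (1 : ℝ≥0∞) ≤ μ E := by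
      calc (1 : ℝ≥0∞) = μ Set.univ := measure_univ.symm
        _ ≤ μ ({x | ∃ᶠ n in atTop, T^[n] x ∈ A n} ∪ {x | ¬ ∃ᶠ n in atTop, T^[n] x ∈ A n}) := by
            refine measure_mono fun x _ => ?_
            by_cases h : ∃ᶠ n in atTop, T^[n] x ∈ A n
            · exact Set.mem_union_left _ h
            · exact Set.mem_union_right _ h
        _ ≤ μ {x | ∃ᶠ n in atTop, T^[n] x ∈ A n} + μ {x | ¬ ∃ᶠ n in atTop, T^[n] x ∈ A n} :=
            measure_union_le _ _
        _ ≤ μ (G a ∪ ⋃ k : ℕ, (G (a + d * k) \ G a)) + 0 := by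
            rw [hae]
            exact add_le_add (measure_mono hbadsub) le_rfl
        _ ≤ (μ (G a) + μ (⋃ k : ℕ, (G (a + d * k) \ G a))) + 0 := by
            gcongr
            exact measure_union_le _ _
        _ = μ E := by rw [hnullU, hGμ a, add_zero, add_zero]
    exact absurd hE1 (not_lt.mpr hlt)
  rcases lt_trichotomy (i : ℕ) (i' : ℕ) with h | h | h
  · exact main i i' h (hnullpair i' i heq.symm)
  · exact absurd (Fin.ext h) hne
  · exact main i' i h (hnullpair i i' heq)


/-- **Proposition 1.6, first part.** If `μ` is a nontrivial probability measure
(some measurable set has measure strictly between 0 and 1), then for every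
measure-preserving map `T` there is a sequence `(A n)` of measurable sets with
divergent sum of measures which is not Borel–Cantelli: it is not the case that
a.e. point satisfies `T^n x ∈ A n` for infinitely many `n`. -/
theorem exists_not_BC_sequence_of_nontrivial
    {X : Type*} [MeasurableSpace X] (μ : Measure X) [IsProbabilityMeasure μ]
    (hnontriv : ∃ E : Set X, MeasurableSet E ∧ 0 < μ E ∧ μ E < 1)
    (T : X → X) (hT : Measurable T) (hTm : MeasurePreserving T μ μ) :
    ∃ A : ℕ → Set X, (∀ n, MeasurableSet (A n)) ∧
      Tendsto (fun N : ℕ => ∑ n ∈ Finset.Icc 1 N, (μ (A n)).toReal) atTop atTop ∧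
      ¬ (∀ᵐ x ∂μ, ∃ᶠ n in atTop, T^[n] x ∈ A n) := by
  obtain ⟨E, hEm, hE0, hE1⟩ := hnontriv
  by_cases hA : ∀ k : ℕ, ∃ S : Set X, MeasurableSet S ∧ 0 < μ S ∧ μ S ≤ 2⁻¹ ^ k
  · exact caseA μ T hT hTm hA
  · push_neg at hA
    obtain ⟨k₀, hk₀⟩ := hA
    refine caseB μ E hEm hE0 hE1 T hT hTm k₀ (fun S hSm hSle => ?_)
    by_contra h0
    exact absurd hSle (hk₀ S hSm (pos_iff_ne_zero.mpr h0)).not_ge
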